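/- Let X be a nonnegative real-valued random variable on a probability space such that X and X² are integrable, with mean μ = E[X] > 0 and variance σ² = Var(X). Then the error J̃ = E[e^{−X}] − e^{−μ}(1 + σ²/2) of the variance-corrected approximation satisfies −(1/2)e^{−μ}σ² ≤ J̃ ≤ σ²(1 − e^{−μ} − μe^{−μ} − (1/2)μ²e^{−μ})/μ². -/

import Mathlib

open MeasureTheory ProbabilityTheory

/-- Pointwise quadratic upper bound for `exp (-x)` on `[0, ∞)`. -/
lemma key_ineq (μ c : ℝ) (hμ : 0 < μ) (hc : Real.exp (-μ) ≤ 2 * c)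
    (h0 : 1 ≤ Real.exp (-μ) * (1 + μ) + c * μ ^ 2) {x : ℝ} (hx : 0 ≤ x) :
    Real.exp (-x) ≤ Real.exp (-μ) * (1 + μ - x) + c * (x - μ) ^ 2 := by
  have hcpos : 0 < 2 * c := lt_of_lt_of_le (Real.exp_pos _) hc
  set d : ℝ → ℝ := fun y => Real.exp (-μ) * (1 + μ - y) + c * (y - μ) ^ 2 - Real.exp (-y) with hd_def
  set d1 : ℝ → ℝ := fun y => -Real.exp (-μ) + 2 * c * (y - μ) + Real.exp (-y) with hd1_def
  set d2 : ℝ → ℝ := fun y => 2 * c - Real.exp (-y) with hd2_def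
  have hexp : ∀ y : ℝ, HasDerivAt (fun z : ℝ => Real.exp (-z)) (-Real.exp (-y)) y := by
    intro y
    simpa using ((hasDerivAt_id y).neg.exp)
  have hd : ∀ y : ℝ, HasDerivAt d (d1 y) y := by
    intro y
    have h1 : HasDerivAt (fun z : ℝ => Real.exp (-μ) * (1 + μ - z)) (Real.exp (-μ) * (-1)) y :=
      ((hasDerivAt_id y).const_sub (1 + μ)).const_mul _
    have h2 : HasDerivAt (fun z : ℝ => c * (z - μ) ^ 2) (c * (2 * (y - μ) ^ 1 * 1)) y :=
      (((hasDerivAt_id y).sub_const μ).pow 2).const_mul c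
    have := (h1.add h2).sub (hexp y)
    exact this.congr_deriv (by simp only [hd1_def]; ring)
  have hd1 : ∀ y : ℝ, HasDerivAt d1 (d2 y) y := by
    intro y
    have h1 : HasDerivAt (fun z : ℝ => -Real.exp (-μ) + 2 * c * (z - μ)) (2 * c * 1) y :=
      (((hasDerivAt_id y).sub_const μ).const_mul (2 * c)).const_add _
    have := h1.add (hexp y)
    exact this.congr_deriv (by simp only [hd2_def]; ring)
  -- the split point
  set s : ℝ := max 0 (-Real.log (2 * c)) with hs_def
  have hs0 : 0 ≤ s := le_max_left _ _
  have hsμ : s ≤ μ := by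
    refine max_le hμ.le ?_
    have : -μ ≤ Real.log (2 * c) := by
      have := Real.log_le_log (Real.exp_pos (-μ)) hc
      rwa [Real.log_exp] at this
    linarith
  have hexp_le : ∀ y : ℝ, s ≤ y → Real.exp (-y) ≤ 2 * c := by
    intro y hy
    have h1 : -Real.log (2 * c) ≤ y := le_trans (le_max_right _ _) hy
    calc Real.exp (-y) ≤ Real.exp (Real.log (2 * c)) := Real.exp_le_exp.2 (by linarith)
      _ = 2 * c := Real.exp_log hcpos
  -- d1 is monotone on [s, ∞)
  have mono1 : MonotoneOn d1 (Set.Ici s) := by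
    refine monotoneOn_of_hasDerivWithinAt_nonneg (convex_Ici s)
      (fun y _ => (hd1 y).continuousAt.continuousWithinAt)
      (fun y hy => (hd1 y).hasDerivWithinAt) ?_
    intro y hy
    rw [interior_Ici] at hy
    have := hexp_le y (le_of_lt hy)
    simp only [hd2_def]
    linarith
  have hd1μ : d1 μ = 0 := by simp [hd1_def]
  have hμs : μ ∈ Set.Ici s := Set.mem_Ici.2 hsμ
  -- d is antitone on [s, μ]
  have anti_d : AntitoneOn d (Set.Icc s μ) := by
    refine antitoneOn_of_hasDerivWithinAt_nonpos (convex_Icc s μ)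
      (fun y _ => (hd y).continuousAt.continuousWithinAt)
      (fun y hy => (hd y).hasDerivWithinAt) ?_
    intro y hy
    rw [interior_Icc] at hy
    have := mono1 (Set.mem_Ici.2 hy.1.le) hμs hy.2.le
    linarith [hd1μ ▸ this]
  -- d is monotone on [μ, ∞)
  have mono_d : MonotoneOn d (Set.Ici μ) := by
    refine monotoneOn_of_hasDerivWithinAt_nonneg (convex_Ici μ)
      (fun y _ => (hd y).continuousAt.continuousWithinAt)
      (fun y hy => (hd y).hasDerivWithinAt) ?_
    intro y hy
    rw [interior_Ici] at hy
    have := mono1 hμs (Set.mem_Ici.2 (le_trans hsμ hy.le)) hy.le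
    linarith [hd1μ ▸ this]
  have hdμ : d μ = 0 := by simp [hd_def]
  have hd_nonneg_ge : ∀ y : ℝ, s ≤ y → 0 ≤ d y := by
    intro y hy
    rcases le_total y μ with h | h
    · have := anti_d (Set.mem_Icc.2 ⟨hy, h⟩) (Set.mem_Icc.2 ⟨hsμ, le_rfl⟩) h
      linarith [hdμ ▸ this]
    · have := mono_d (Set.mem_Ici.2 le_rfl) (Set.mem_Ici.2 h) h
      linarith [hdμ ▸ this]
  -- now the region [0, s]
  have hd0 : 0 ≤ d 0 := by
    simp only [hd_def]
    have : Real.exp (-(0:ℝ)) = 1 := by norm_num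
    rw [this]
    ring_nf
    ring_nf at h0
    linarith
  have final : 0 ≤ d x := by
    rcases le_or_gt s x with h | h
    · exact hd_nonneg_ge x h
    · -- x < s, so s > 0 and s = -log (2c), hence exp (-s) = 2c
      have hspos : 0 < s := lt_of_le_of_lt hx h
      have hs_eq : s = -Real.log (2 * c) := by
        rcases max_cases (0:ℝ) (-Real.log (2 * c)) with ⟨h1, h2⟩ | ⟨h1, h2⟩
        · exfalso; rw [hs_def, h1] at hspos; exact lt_irrefl _ hspos
        · rw [hs_def, h1]
      have hexp_ge : ∀ y : ℝ, y ≤ s → 2 * c ≤ Real.exp (-y) := by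
        intro y hy
        have : Real.log (2 * c) ≤ -y := by rw [hs_eq] at hy; linarith
        calc 2 * c = Real.exp (Real.log (2 * c)) := (Real.exp_log hcpos).symm
          _ ≤ Real.exp (-y) := Real.exp_le_exp.2 this
      -- d is concave on [0, s]
      have conc : ConcaveOn ℝ (Set.Icc 0 s) d := by
        refine concaveOn_of_hasDerivWithinAt2_nonpos (convex_Icc 0 s)
          (fun y _ => (hd y).continuousAt.continuousWithinAt)
          (fun y hy => (hd y).hasDerivWithinAt)
          (fun y hy => (hd1 y).hasDerivWithinAt) ?_
        intro y hy
        rw [interior_Icc] at hy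
        have := hexp_ge y hy.2.le
        simp only [hd2_def]
        linarith
      have hds : 0 ≤ d s := hd_nonneg_ge s le_rfl
      have ha : (0:ℝ) ≤ 1 - x / s := by
        have : x / s ≤ 1 := (div_le_one hspos).2 h.le
        linarith
      have hb : (0:ℝ) ≤ x / s := div_nonneg hx hspos.le
      have hab : (1 - x / s) + x / s = 1 := by ring
      have := conc.2 (Set.mem_Icc.2 ⟨le_rfl, hs0⟩) (Set.mem_Icc.2 ⟨hspos.le, le_rfl⟩) ha hb hab
      have hxeq : (1 - x / s) • (0:ℝ) + (x / s) • s = x := by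
        rw [smul_eq_mul, smul_eq_mul, mul_zero, zero_add, div_mul_cancel₀ x hspos.ne']
      rw [hxeq] at this
      simp only [smul_eq_mul] at this
      exact le_trans (add_nonneg (mul_nonneg ha hd0) (mul_nonneg hb hds)) this
  simpa [hd_def, sub_nonneg] using final

/-- the error J̃ = E[e^{−X}] − e^{−μ}(1 + σ²/2) of the
variance-corrected approximation satisfies
−(1/2)e^{−μ}σ² ≤ J̃ ≤ σ²(1 − e^{−μ} − μe^{−μ} − (1/2)μ²e^{−μ})/μ². -/
theorem stmt_3 {Ω : Type*} [MeasurableSpace Ω] (P : Measure Ω) [IsProbabilityMeasure P]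
    (X : Ω → ℝ) (hXnn : ∀ ω, 0 ≤ X ω)
    (hX1 : Integrable X P) (hX2 : Integrable (fun ω => X ω ^ 2) P)
    (hmean : 0 < ∫ ω, X ω ∂P) :
    -((1/2) * Real.exp (-(∫ ω, X ω ∂P)) * variance X P) ≤
        (∫ ω, Real.exp (-X ω) ∂P) -
          Real.exp (-(∫ ω, X ω ∂P)) * (1 + variance X P / 2) ∧
      (∫ ω, Real.exp (-X ω) ∂P) -
          Real.exp (-(∫ ω, X ω ∂P)) * (1 + variance X P / 2) ≤
        variance X P *
          (1 - Real.exp (-(∫ ω, X ω ∂P)) -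
            (∫ ω, X ω ∂P) * Real.exp (-(∫ ω, X ω ∂P)) -
            (1/2) * (∫ ω, X ω ∂P)^2 * Real.exp (-(∫ ω, X ω ∂P))) /
          (∫ ω, X ω ∂P)^2 := by
  set μ : ℝ := ∫ ω, X ω ∂P with hμ_def
  have hμ : 0 < μ := hmean
  set c : ℝ := (1 - Real.exp (-μ) - μ * Real.exp (-μ)) / μ ^ 2 with hc_def
  have hμ2 : (0:ℝ) < μ ^ 2 := by positivity
  have hE : Real.exp (-μ) * Real.exp μ = 1 := by
    rw [← Real.exp_add]; simp
  have hq : 1 + μ + μ ^ 2 / 2 ≤ Real.exp μ := Real.quadratic_le_exp_of_nonneg hμ.le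
  have hEpos : 0 < Real.exp (-μ) := Real.exp_pos _
  have hc : Real.exp (-μ) ≤ 2 * c := by
    have key : Real.exp (-μ) * μ ^ 2 ≤ 2 * (1 - Real.exp (-μ) - μ * Real.exp (-μ)) := by
      nlinarith [hq, hE, hEpos]
    rw [hc_def, ← mul_div_assoc, le_div_iff₀ hμ2]
    exact key
  have h0 : 1 ≤ Real.exp (-μ) * (1 + μ) + c * μ ^ 2 := by
    rw [hc_def]
    field_simp
    ring_nf
    linarith
  -- variance as an integral
  have hXm2 : MemLp X 2 P :=
    (memLp_two_iff_integrable_sq hX1.aestronglyMeasurable).2 hX2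
  have hvar : variance X P = ∫ ω, (X ω - μ) ^ 2 ∂P := by
    rw [variance_eq_integral hXm2.aestronglyMeasurable.aemeasurable]
  -- integrability facts
  have hI2 : Integrable (fun ω => (X ω - μ) ^ 2) P := by
    have h : Integrable (fun ω => X ω ^ 2 - 2 * μ * X ω + μ ^ 2) P :=
      (hX2.sub (hX1.const_mul (2 * μ))).add (integrable_const _)
    exact h.congr (Filter.Eventually.of_forall fun ω => by ring)
  have hIlin : Integrable (fun ω => Real.exp (-μ) * (1 + μ - X ω)) P := by
    have h : Integrable (fun ω => Real.exp (-μ) * (1 + μ) - Real.exp (-μ) * X ω) P :=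
      (integrable_const _).sub (hX1.const_mul _)
    exact h.congr (Filter.Eventually.of_forall fun ω => by ring)
  have hIg : Integrable (fun ω => Real.exp (-μ) * (1 + μ - X ω) + c * (X ω - μ) ^ 2) P :=
    hIlin.add (hI2.const_mul c)
  have hIe : Integrable (fun ω => Real.exp (-X ω)) P := by
    refine Integrable.mono' (integrable_const (1:ℝ))
      ((Real.continuous_exp.comp continuous_neg).comp_aestronglyMeasurable
        hX1.aestronglyMeasurable) ?_
    refine Filter.Eventually.of_forall fun ω => ?_
    rw [Real.norm_eq_abs, abs_of_pos (Real.exp_pos _)]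
    exact Real.exp_le_one_iff.2 (by linarith [hXnn ω])
  -- lower bound pointwise : tangent line
  have hlow : ∀ ω, Real.exp (-μ) * (1 + μ - X ω) ≤ Real.exp (-X ω) := by
    intro ω
    have h1 : (μ - X ω) + 1 ≤ Real.exp (μ - X ω) := Real.add_one_le_exp _
    have h2 : Real.exp (-μ) * Real.exp (μ - X ω) = Real.exp (-X ω) := by
      rw [← Real.exp_add]; ring_nf
    nlinarith [hEpos, h1, h2]
  have hup : ∀ ω, Real.exp (-X ω) ≤ Real.exp (-μ) * (1 + μ - X ω) + c * (X ω - μ) ^ 2 :=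
    fun ω => key_ineq μ c hμ hc h0 (hXnn ω)
  -- integral computations
  have hint_lin : ∫ ω, Real.exp (-μ) * (1 + μ - X ω) ∂P = Real.exp (-μ) := by
    rw [show (fun ω => Real.exp (-μ) * (1 + μ - X ω)) = fun ω => Real.exp (-μ) * (1 + μ) - Real.exp (-μ) * X ω from funext fun ω => by ring]
    rw [integral_sub (integrable_const _) (hX1.const_mul _), integral_const,
      integral_const_mul]
    simp [← hμ_def]
    ring
  have hint_g : ∫ ω, (Real.exp (-μ) * (1 + μ - X ω) + c * (X ω - μ) ^ 2) ∂P
      = Real.exp (-μ) + c * variance X P := by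
    rw [integral_add hIlin (hI2.const_mul c), hint_lin, integral_const_mul, hvar]
  -- the two integral inequalities
  have hlowI : Real.exp (-μ) ≤ ∫ ω, Real.exp (-X ω) ∂P := by
    rw [← hint_lin]
    exact integral_mono hIlin hIe hlow
  have hupI : (∫ ω, Real.exp (-X ω) ∂P) ≤ Real.exp (-μ) + c * variance X P := by
    rw [← hint_g]
    exact integral_mono hIe hIg hup
  constructor
  · linarith
  · have heq : Real.exp (-μ) + c * variance X P - Real.exp (-μ) * (1 + variance X P / 2)
        = variance X P * (1 - Real.exp (-μ) - μ * Real.exp (-μ)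
            - (1/2) * μ ^ 2 * Real.exp (-μ)) / μ ^ 2 := by
      rw [hc_def]
      field_simp
      ring
    linarith
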